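/- There exists a set R ⊆ ℕ which is both canonically immune and hyperimmune. -/

import Mathlib

/-- The `e`-th computably enumerable set. -/
def WSet (e : ℕ) : Set ℕ := {n | ((Denumerable.ofNat Nat.Partrec.Code e).eval n).Dom}

/-- A canonical numbering: a computable surjection onto the finite subsets of `ℕ`. -/
def CanonicalNumbering (D : ℕ → Finset ℕ) : Prop := Computable D ∧ Function.Surjective D

/-- `R` is canonically immune with modulus of immunity `h`. -/
def CanonImmuneMod (R : Set ℕ) (h : ℕ → ℕ) : Prop :=
  R.Infinite ∧ ∀ D : ℕ → Finset ℕ, CanonicalNumbering D →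
    ∀ᶠ i in Filter.atTop, ↑(D i) ⊆ R → (D i).card ≤ h i

/-- `R` is canonically immune. -/
def CanonicallyImmune (R : Set ℕ) : Prop :=
  ∃ h : ℕ → ℕ, Computable h ∧ CanonImmuneMod R h

/-- `R` is Δ⁰₂ (limit computable). -/
def Delta02 (R : Set ℕ) : Prop :=
  ∃ f : ℕ → ℕ → Bool, Computable₂ f ∧
    ∀ n, ∀ᶠ s in Filter.atTop, (f s n = true ↔ n ∈ R)

/-- Partial functions recursive in an oracle `O : ℕ → ℕ`. -/
inductive RecursiveIn' (O : ℕ → ℕ) : (ℕ →. ℕ) → Prop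
  | zero : RecursiveIn' O fun _ => 0
  | succ : RecursiveIn' O fun n => Part.some (n + 1)
  | left : RecursiveIn' O fun n => Part.some (Nat.unpair n).1
  | right : RecursiveIn' O fun n => Part.some (Nat.unpair n).2
  | oracle : RecursiveIn' O fun n => Part.some (O n)
  | pair {f g} : RecursiveIn' O f → RecursiveIn' O g →
      RecursiveIn' O fun n => Nat.pair <$> f n <*> g n
  | comp {f g} : RecursiveIn' O f → RecursiveIn' O g →
      RecursiveIn' O fun n => g n >>= f
  | prec {f g} : RecursiveIn' O f → RecursiveIn' O g →
      RecursiveIn' O (Nat.unpaired fun a n =>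
        n.rec (f a) fun y IH => do let i ← IH; g (Nat.pair a (Nat.pair y i)))
  | rfind {f} : RecursiveIn' O f →
      RecursiveIn' O fun a => Nat.rfind fun n => (fun m => m = 0) <$> f (Nat.pair a n)

open Classical in
/-- Characteristic function of a set of naturals. -/
noncomputable def chi (A : Set ℕ) : ℕ → ℕ := fun n => if n ∈ A then 1 else 0

/-- `A` is Turing reducible to the oracle `O`. -/
def TuringReducibleTo (A : Set ℕ) (O : ℕ → ℕ) : Prop :=
  RecursiveIn' O fun n => Part.some (chi A n)

/-- `A` is Turing reducible to the set `B`. -/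
def TuringReducible' (A B : Set ℕ) : Prop := TuringReducibleTo A (chi B)

/-- The oracle given by a real `G ∈ 2^ω`. -/
def oracleOf (G : ℕ → Bool) : ℕ → ℕ := fun n => cond (G n) 1 0

/-- `S` is computably enumerable relative to the real `G`. -/
def CEIn (G : ℕ → Bool) (S : Set ℕ) : Prop :=
  ∃ f : ℕ →. ℕ, RecursiveIn' (oracleOf G) f ∧ S = {n | (f n).Dom}

/-- The length-`n` initial segment of a real. -/
def initSeg (G : ℕ → Bool) (n : ℕ) : List Bool := List.ofFn fun i : Fin n => G i

/-- A Σ⁰₂ set of binary strings. -/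
def Sigma02Strings (X : Set (List Bool)) : Prop :=
  ∃ p : List Bool → ℕ → ℕ → Bool,
    (Computable fun x : List Bool × ℕ × ℕ => p x.1 x.2.1 x.2.2) ∧
    X = {σ | ∃ m, ∀ k, p σ m k = true}

/-- A (Cohen) 2-generic real. -/
def TwoGeneric (G : ℕ → Bool) : Prop :=
  ∀ X : Set (List Bool), Sigma02Strings X →
    (∃ n, initSeg G n ∈ X) ∨ (∃ n, ∀ τ, initSeg G n <+: τ → τ ∉ X)

/-- A computably enumerable set of binary strings. -/
def CEStrings (X : Set (List Bool)) : Prop :=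
  ∃ p : List Bool → ℕ → Bool, Computable₂ p ∧ X = {σ | ∃ s, p σ s = true}

/-- A dense set of binary strings. -/
def DenseStrings (X : Set (List Bool)) : Prop := ∀ σ, ∃ τ, σ <+: τ ∧ τ ∈ X

/-- A weakly 1-generic real. -/
def Weakly1Generic (G : ℕ → Bool) : Prop :=
  ∀ X : Set (List Bool), CEStrings X → DenseStrings X → ∃ n, initSeg G n ∈ X

/-- A hyperimmune set: infinite and its increasing enumeration (principal function)
is not dominated by any computable function. -/
def Hyperimmune (R : Set ℕ) : Prop :=
  R.Infinite ∧ ∀ f : ℕ → ℕ, Computable f →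
    ∃ᶠ n in Filter.atTop, f n < Nat.nth (· ∈ R) n

/-- A (computable) Mathias condition `[a, A]`. -/
structure MathiasCond where
  a : Finset ℕ
  A : Set ℕ
  infinite : A.Infinite
  comp : ComputablePred (· ∈ A)
  lt : ∀ x ∈ a, ∀ y ∈ A, x < y

/-- `c'` extends `c` as a Mathias condition. -/
def MathiasCond.Extends (c' c : MathiasCond) : Prop :=
  c.a ⊆ c'.a ∧ (↑c'.a \ ↑c.a : Set ℕ) ⊆ c.A ∧ c'.A ⊆ c.A

/-- A dense family of Mathias conditions. -/
def MathiasDense (𝒳 : Set MathiasCond) : Prop := ∀ c, ∃ c' ∈ 𝒳, c'.Extends c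

/-- `R ∈ [a, A]`. -/
def MathiasCond.Mem (c : MathiasCond) (R : Set ℕ) : Prop :=
  ↑c.a ⊆ R ∧ R ⊆ ↑c.a ∪ c.A

/-- `R` meets the family `𝒳` of Mathias conditions. -/
def Meets (R : Set ℕ) (𝒳 : Set MathiasCond) : Prop := ∃ c ∈ 𝒳, c.Mem R

/-- The arithmetical sets of naturals: closure of the computable sets under
complementation and projection. -/
inductive Arithmetical : Set ℕ → Prop
  | of_computable {S : Set ℕ} : ComputablePred (· ∈ S) → Arithmetical S
  | compl {S : Set ℕ} : Arithmetical S → Arithmetical {n | n ∉ S}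
  | proj {S : Set ℕ} : Arithmetical S → Arithmetical {n | ∃ m, Nat.pair n m ∈ S}

open Classical in
/-- `n` codes the Mathias condition `c`: its first component is the canonical code of the
finite set and its second component is an index for the characteristic function of `A`. -/
noncomputable def CondCode (n : ℕ) (c : MathiasCond) : Prop :=
  n.unpair.1 = Encodable.encode c.a ∧
  ∀ x, ((Denumerable.ofNat Nat.Partrec.Code n.unpair.2)).eval x = Part.some (if x ∈ c.A then 1 else 0)

/-- The set of codes of members of `𝒳`. -/
def CodesOf (𝒳 : Set MathiasCond) : Set ℕ := {n | ∃ c ∈ 𝒳, CondCode n c}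

/-- A Mathias generic real: one meeting every arithmetically definable dense family
of Mathias conditions. -/
def MathiasGeneric (R : Set ℕ) : Prop :=
  ∀ 𝒳 : Set MathiasCond, Arithmetical (CodesOf 𝒳) → MathiasDense 𝒳 → Meets R 𝒳

/-- A Σ⁰₃ set of naturals. -/
def Sigma03Set (S : Set ℕ) : Prop :=
  ∃ p : ℕ → ℕ → ℕ → ℕ → Bool,
    (Computable fun x : ℕ × ℕ × ℕ × ℕ => p x.1 x.2.1 x.2.2.1 x.2.2.2) ∧
    S = {n | ∃ a, ∀ b, ∃ c, p n a b c = true}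

/-- A Mathias 3-generic real. -/
def Mathias3Generic (R : Set ℕ) : Prop :=
  ∀ 𝒳 : Set MathiasCond, Sigma03Set (CodesOf 𝒳) → MathiasDense 𝒳 → Meets R 𝒳

/-- An effectively immune set. -/
def EffectivelyImmune (Q : Set ℕ) : Prop :=
  Q.Infinite ∧ ∃ h : ℕ → ℕ, Computable h ∧
    ∀ e, WSet e ⊆ Q → (WSet e).Finite ∧ (WSet e).ncard ≤ h e

/-- The basic cylinder of 2^ω determined by the finite string `σ`. -/
def Cyl (σ : List Bool) : Set (ℕ → Bool) := {G | ∀ i : Fin σ.length, G i = σ.get i}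

/-- The open subset of 2^ω generated by a set of strings. -/
def OpenFrom (P : Set (List Bool)) : Set (ℕ → Bool) := ⋃ σ ∈ P, Cyl σ

/-- A uniformly c.e. sequence of sets of strings. -/
def UniformlyCE (P : ℕ → Set (List Bool)) : Prop :=
  ∃ f : ℕ → List Bool → ℕ → Bool,
    (Computable fun x : ℕ × List Bool × ℕ => f x.1 x.2.1 x.2.2) ∧
    ∀ n σ, σ ∈ P n ↔ ∃ s, f n σ s = true

/-- `μ` is the uniform (fair-coin) product measure on 2^ω: every basic cylinder
determined by a string of length `l` has measure `2⁻ˡ`. -/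
def IsFairCoin (μ : MeasureTheory.Measure (ℕ → Bool)) : Prop :=
  ∀ σ : List Bool, μ (Cyl σ) = (2 ^ σ.length : ENNReal)⁻¹

/-- A Schnorr test with respect to the measure `μ`: uniformly c.e. open sets with
uniformly computable measures bounded by `2^{-n}`. -/
def SchnorrTest (μ : MeasureTheory.Measure (ℕ → Bool)) (U : ℕ → Set (ℕ → Bool)) : Prop :=
  (∃ P : ℕ → Set (List Bool), UniformlyCE P ∧ ∀ n, U n = OpenFrom (P n)) ∧
  (∃ q : ℕ → ℕ → ℚ, Computable₂ q ∧
    ∀ n k, |(q n k : ℝ) - (μ (U n)).toReal| ≤ (2 : ℝ)⁻¹ ^ k) ∧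
  ∀ n, μ (U n) ≤ (2 ^ n : ENNReal)⁻¹

/-- A Schnorr random real (with respect to the fair-coin measure `μ`). -/
def SchnorrRandom (μ : MeasureTheory.Measure (ℕ → Bool)) (G : ℕ → Bool) : Prop :=
  ∀ U : ℕ → Set (ℕ → Bool), SchnorrTest μ U → G ∉ ⋂ n, U n

open Classical in
/-- The characteristic sequence of a set of naturals, as a point of 2^ω. -/
noncomputable def chiB (R : Set ℕ) : ℕ → Bool := fun n => decide (n ∈ R)


/-! ### Auxiliary constructions for the main theorem -/

section CIHyp

open Encodable Denumerable

/-- Elements of `raise' l n` are bounded by `n + encode l`. -/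
lemma raise'_mem_le : ∀ (l : List ℕ) (n : ℕ), ∀ a ∈ Denumerable.raise' l n,
    a ≤ n + Encodable.encode l := by
  intro l
  induction l with
  | nil => intro n a ha; simp [Denumerable.raise'] at ha
  | cons m l ih =>
    intro n a ha
    rw [show Denumerable.raise' (m :: l) n = (m + n) :: Denumerable.raise' l (m + n + 1)
      from rfl] at ha
    have hle : m + Encodable.encode l ≤ Nat.pair m (Encodable.encode l) := by
      simpa using Nat.add_le_pair m (Encodable.encode l)
    have henc : Encodable.encode (m :: l) = Nat.pair m (Encodable.encode l) + 1 := by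
      rw [Encodable.encode_list_cons, Encodable.encode_nat]
    rcases List.mem_cons.mp ha with h | h
    · subst h
      have := Nat.left_le_pair m (Encodable.encode l)
      omega
    · have := ih (m + n + 1) a h
      omega

/-- Elements of the `n`-th canonical finite set are bounded by `n`. -/
lemma mem_ofNat_finset_le {n a : ℕ} (ha : a ∈ Denumerable.ofNat (Finset ℕ) n) : a ≤ n := by
  have h0 : Denumerable.ofNat (Finset ℕ) n =
      Finset.map (Denumerable.eqv ℕ).symm.toEmbedding
        (Denumerable.raise'Finset (Denumerable.ofNat (List ℕ) n) 0) :=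
    Denumerable.ofNat_of_decode rfl
  rw [h0, Finset.mem_map] at ha
  obtain ⟨b, hb, rfl⟩ := ha
  have hb' : b ∈ Denumerable.raise' (Denumerable.ofNat (List ℕ) n) 0 := by
    exact hb
  have := raise'_mem_le (Denumerable.ofNat (List ℕ) n) 0 b hb'
  have henc : Encodable.encode (Denumerable.ofNat (List ℕ) n) = n := Denumerable.encode_ofNat n
  have hid : (Denumerable.eqv ℕ).symm.toEmbedding b = b := rfl
  omega

/-- Elements of a finite set of naturals are bounded by its code. -/
lemma mem_finset_le_encode {s : Finset ℕ} {a : ℕ} (ha : a ∈ s) :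
    a ≤ @Encodable.encode (Finset ℕ) Primcodable.toEncodable s := by
  apply mem_ofNat_finset_le (n := @Encodable.encode (Finset ℕ) Primcodable.toEncodable s)
  have h : Denumerable.ofNat (Finset ℕ)
      (@Encodable.encode (Finset ℕ) Primcodable.toEncodable s) = s :=
    Denumerable.ofNat_encode s
  rwa [h]

open Classical in
/-- Total extension of the `e`-th partial computable function. -/
noncomputable def evF (e n : ℕ) : ℕ :=
  if h : ((Denumerable.ofNat Nat.Partrec.Code e).eval n).Dom then
    ((Denumerable.ofNat Nat.Partrec.Code e).eval n).get h
  else 0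

lemma evF_eq {c : Nat.Partrec.Code} {g : ℕ → ℕ} (hc : c.eval = fun n => Part.some (g n)) (n : ℕ) :
    evF (Encodable.encode c) n = g n := by
  simp [evF, Denumerable.ofNat_encode, hc]

lemma exists_evF {f : ℕ → ℕ} (hf : Computable f) : ∃ e : ℕ, ∀ n, evF e n = f n := by
  have h1 : Nat.Partrec (fun n => Part.some (f n)) := Partrec.nat_iff.mp hf
  obtain ⟨c, hc⟩ := Nat.Partrec.Code.exists_code.mp h1
  exact ⟨Encodable.encode c, fun n => evF_eq hc n⟩

/-- A fast-growing sequence dominating all total computable functions. -/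
noncomputable def xseq : ℕ → ℕ
  | 0 => evF 0 0 + 1
  | n + 1 => max (xseq n) ((Finset.range (n + 2)).sup fun e => evF e (n + 1)) + 1

lemma xseq_strictMono : StrictMono xseq :=
  strictMono_nat_of_lt_succ fun n => by
    have h1 : xseq n ≤ max (xseq n) ((Finset.range (n + 2)).sup fun e => evF e (n + 1)) :=
      le_max_left _ _
    have h2 : xseq (n + 1) =
        max (xseq n) ((Finset.range (n + 2)).sup fun e => evF e (n + 1)) + 1 := rfl
    omega

lemma evF_lt_xseq {e n : ℕ} (h : e ≤ n) : evF e n < xseq n := by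
  cases n with
  | zero =>
    interval_cases e
    have h0 : xseq 0 = evF 0 0 + 1 := rfl
    omega
  | succ n =>
    have hm : e ∈ Finset.range (n + 2) := Finset.mem_range.mpr (by omega)
    have h1 : evF e (n + 1) ≤ (Finset.range (n + 2)).sup fun e => evF e (n + 1) :=
      Finset.le_sup (f := fun e => evF e (n + 1)) hm
    have h2 : xseq (n + 1) =
        max (xseq n) ((Finset.range (n + 2)).sup fun e => evF e (n + 1)) + 1 := rfl
    have h3 := le_max_right (xseq n) ((Finset.range (n + 2)).sup fun e => evF e (n + 1))
    omega

lemma xseq_range_infinite : (Set.range xseq).Infinite :=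
  Set.infinite_range_of_injective xseq_strictMono.injective

lemma nth_xseq : Nat.nth (· ∈ Set.range xseq) = xseq := by
  have hinf : (setOf (· ∈ Set.range xseq)).Infinite := xseq_range_infinite
  have hr : Set.range (Nat.nth (· ∈ Set.range xseq)) = Set.range xseq :=
    Nat.range_nth_of_infinite hinf
  exact ((Nat.nth_strictMono hinf).range_inj xseq_strictMono).mp hr

end CIHyp

/-- There is a canonically immune set which is also hyperimmune. -/
theorem exists_canonically_immune_hyperimmune :
    ∃ R : Set ℕ, CanonicallyImmune R ∧ Hyperimmune R := by
  refine ⟨Set.range xseq, ⟨id, Computable.id, xseq_range_infinite, ?_⟩, xseq_range_infinite, ?_⟩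
  · -- canonical immunity with modulus `id`
    rintro D ⟨hDcomp, -⟩
    obtain ⟨e, he⟩ := exists_evF (Computable.encode.comp hDcomp)
    rw [Filter.eventually_atTop]
    refine ⟨e, fun i hi hsub => ?_⟩
    by_contra hcard
    push_neg at hcard
    simp only [id_eq] at hcard
    -- every element of `D i` is `xseq k` for some `k`; extract the index set
    have hmax : ∀ a ∈ D i, a < xseq i := by
      intro a ha
      have h1 : a ≤ @Encodable.encode (Finset ℕ) Primcodable.toEncodable (D i) :=
        mem_finset_le_encode ha
      have h2 : evF e i = @Encodable.encode (Finset ℕ) Primcodable.toEncodable (D i) := he i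
      have h3 : evF e i < xseq i := evF_lt_xseq hi
      omega
    -- the indices of elements of D i
    classical
    have himg : ∀ a ∈ D i, ∃ k, xseq k = a := fun a ha => hsub ha
    choose idx hidx using himg
    have hidxlt : ∀ a (ha : a ∈ D i), idx a ha < i := by
      intro a ha
      by_contra hk
      push_neg at hk
      have := xseq_strictMono.monotone hk
      rw [hidx a ha] at this
      exact absurd this (not_le.mpr (hmax a ha))
    -- map D i injectively into range i
    have : (D i).card ≤ (Finset.range i).card := by
      apply Finset.card_le_card_of_injOn (fun a => if ha : a ∈ D i then idx a ha else 0)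
      · intro a ha
        simp only [Finset.mem_coe] at ha ⊢
        simp only [dif_pos ha, Finset.mem_range]
        exact hidxlt a ha
      · intro a ha b hb hab
        simp only [Finset.mem_coe] at ha hb
        simp only [dif_pos ha, dif_pos hb] at hab
        rw [← hidx a ha, ← hidx b hb, hab]
    rw [Finset.card_range] at this
    omega
  · -- hyperimmunity
    intro f hf
    obtain ⟨e, he⟩ := exists_evF hf
    apply Filter.Eventually.frequently
    rw [Filter.eventually_atTop]
    refine ⟨e, fun n hn => ?_⟩
    have h1 : evF e n < xseq n := evF_lt_xseq hn
    have h2 := he n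
    rw [nth_xseq]
    omega
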